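/- The element N(x_{1121222} − x_{1122212}) + 3·x₂·(x_{112212} − x_{112122}) of S(gl_N)^{⊗2} is nonzero for all sufficiently large N. -/
import Mathlib


open MvPolynomial

/-- The necklace element `x_μ` of a 2-colored necklace `μ` of order `n` in `S(gl_N)^{⊗2}`,
the latter modelled as the polynomial algebra on two copies of the basis `e_{ij}` of `gl_N`:
variable `(s, i, j)` is the generator `e_{ij}` in tensor slot `s`. -/
noncomputable def neck (F : Type) [Field F] (N n : ℕ) (hn : 0 < n) (μ : ℕ → Fin 2) :
    MvPolynomial (Fin 2 × Fin N × Fin N) F :=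
  ∑ i : Fin n → Fin N, ∏ m : Fin n,
    X (μ m.val, i m, i ⟨(m.val + 1) % n, Nat.mod_lt _ hn⟩)

/-- our two test matrices -/
def mval (s : Fin 2) : Matrix (Fin 3) (Fin 3) ℤ :=
  if s = 0 then !![0,0,0;0,0,1;0,1,0] else !![0,0,1;1,0,0;0,0,1]

lemma sum_pi_cons {n : ℕ} {R : Type*} [AddCommMonoid R] (g : (Fin (n+1) → Fin 3) → R) :
    ∑ j : Fin (n+1) → Fin 3, g j = ∑ a : Fin 3, ∑ t : Fin n → Fin 3, g (Fin.cons a t) := by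
  have h1 : ∑ j : Fin (n+1) → Fin 3, g j
      = ∑ p : Fin 3 × (Fin n → Fin 3), g (Fin.cons p.1 p.2) :=
    (Fintype.sum_equiv (Fin.consEquiv fun _ => Fin 3) (fun p => g (Fin.cons p.1 p.2)) g
      (fun p => rfl)).symm
  rw [h1, Fintype.sum_prod_type]

lemma path_sum : ∀ (n : ℕ) (M : ℕ → Matrix (Fin 3) (Fin 3) ℤ) (a b : Fin 3),
    (∑ t : Fin n → Fin 3,
      (∏ m : Fin n, M m.val ((Fin.cons a t : Fin (n+1) → Fin 3) m.castSucc) (t m)) * M n ((Fin.cons a t : Fin (n+1) → Fin 3) (Fin.last n)) b)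
    = (List.ofFn fun m : Fin (n+1) => M m.val).prod a b := by
  intro n
  induction n with
  | zero =>
    intro M a b
    simp [List.ofFn_succ]
  | succ n ih =>
    intro M a b
    rw [sum_pi_cons (fun t => _)]
    have hrw : ∀ (c : Fin 3) (t' : Fin n → Fin 3),
        (∏ m : Fin (n+1), M m.val
            ((Fin.cons a (Fin.cons c t') : Fin (n+2) → Fin 3) m.castSucc)
            ((Fin.cons c t' : Fin (n+1) → Fin 3) m)) *
          M (n+1) ((Fin.cons a (Fin.cons c t') : Fin (n+2) → Fin 3) (Fin.last (n+1))) b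
        = M 0 a c * ((∏ m : Fin n, (fun i => M (i+1)) m.val ((Fin.cons c t' : Fin (n+1) → Fin 3) m.castSucc) (t' m)) *
            (fun i => M (i+1)) n ((Fin.cons c t' : Fin (n+1) → Fin 3) (Fin.last n)) b) := by
      intro c t'
      rw [Fin.prod_univ_succ]
      simp only [Fin.castSucc_zero, Fin.cons_zero, Fin.cons_succ, Fin.val_succ, ← Fin.succ_castSucc,
        ← Fin.succ_last, Fin.val_zero]
      simp [mul_assoc]
    simp only [hrw]
    simp only [← Finset.mul_sum]
    have := fun c => ih (fun i => M (i+1)) c b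
    simp only [this]
    have hl : (List.ofFn fun m : Fin (n+2) => M m.val)
        = M 0 :: List.ofFn (fun m : Fin (n+1) => M (m.val+1)) := by
      rw [List.ofFn_succ]
      simp [Fin.val_succ]
    rw [hl, List.prod_cons, Matrix.mul_apply]

lemma cyclic_sum (n : ℕ) (M : ℕ → Matrix (Fin 3) (Fin 3) ℤ) :
    (∑ j : Fin (n+1) → Fin 3, ∏ m : Fin (n+1),
        M m.val (j m) (j ⟨(m.val + 1) % (n+1), Nat.mod_lt _ (Nat.succ_pos n)⟩))
    = Matrix.trace (List.ofFn fun m : Fin (n+1) => M m.val).prod := by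
  rw [sum_pi_cons (fun j => _)]
  have key : ∀ (a : Fin 3) (t : Fin n → Fin 3),
      (∏ m : Fin (n+1), M m.val ((Fin.cons a t : Fin (n+1) → Fin 3) m)
        ((Fin.cons a t : Fin (n+1) → Fin 3) ⟨(m.val + 1) % (n+1), Nat.mod_lt _ (Nat.succ_pos n)⟩))
      = (∏ m : Fin n, M m.val ((Fin.cons a t : Fin (n+1) → Fin 3) m.castSucc) (t m)) *
          M n ((Fin.cons a t : Fin (n+1) → Fin 3) (Fin.last n)) a := by
    intro a t
    rw [Fin.prod_univ_castSucc]
    congr 1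
    · refine Finset.prod_congr rfl (fun m _ => ?_)
      congr 1
      have : (⟨((m.castSucc : Fin (n+1)).val + 1) % (n+1), Nat.mod_lt _ (Nat.succ_pos n)⟩ :
          Fin (n+1)) = m.succ := by
        ext
        simp [Nat.mod_eq_of_lt (Nat.succ_lt_succ m.isLt)]
      rw [this, Fin.cons_succ]
    · have h1 : ((Fin.last n : Fin (n+1)).val + 1) % (n+1) = 0 := by simp
      have : (⟨((Fin.last n : Fin (n+1)).val + 1) % (n+1), Nat.mod_lt _ (Nat.succ_pos n)⟩ :
          Fin (n+1)) = 0 := by ext; simp [h1]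
      rw [this, Fin.cons_zero]
      rfl
  simp only [key]
  simp only [path_sum n M]
  simp [Matrix.trace, Matrix.diag]

/-- The evaluation point: embed the two 3×3 test matrices into the `N×N` variables. -/
def vv (F : Type) [Field F] (N : ℕ) : Fin 2 × Fin N × Fin N → F :=
  fun p => if h : p.2.1.val < 3 ∧ p.2.2.val < 3 then
      ((mval p.1 ⟨p.2.1.val, h.1⟩ ⟨p.2.2.val, h.2⟩ : ℤ) : F) else 0

lemma eval_neck (F : Type) [Field F] {N : ℕ} (h3 : 3 ≤ N) (n : ℕ) (hn : 0 < n) (μ : ℕ → Fin 2) :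
    MvPolynomial.eval (vv F N) (neck F N n hn μ) =
      ((∑ j : Fin n → Fin 3, ∏ m : Fin n,
        mval (μ m.val) (j m) (j ⟨(m.val + 1) % n, Nat.mod_lt _ hn⟩) : ℤ) : F) := by
  classical
  unfold neck
  rw [map_sum]
  simp only [map_prod, eval_X]
  set emb : (Fin n → Fin 3) → (Fin n → Fin N) := fun j m => Fin.castLE h3 (j m) with hemb
  have hinj : Function.Injective emb := by
    intro a b hab
    funext m
    exact Fin.castLE_injective h3 (congrFun hab m)
  have hzero : ∀ i ∈ (Finset.univ : Finset (Fin n → Fin N)),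
      i ∉ (Finset.univ : Finset (Fin n → Fin 3)).image emb →
      (∏ m : Fin n, vv F N (μ m.val, i m, i ⟨(m.val + 1) % n, Nat.mod_lt _ hn⟩)) = 0 := by
    intro i _ hi
    have hex : ∃ m : Fin n, ¬ (i m).val < 3 := by
      by_contra hall
      push_neg at hall
      exact hi (Finset.mem_image.mpr ⟨fun m => ⟨(i m).val, hall m⟩, Finset.mem_univ _,
        funext fun m => Fin.ext rfl⟩)
    obtain ⟨m, hm⟩ := hex
    refine Finset.prod_eq_zero (Finset.mem_univ m) ?_
    exact dif_neg (fun hc => hm hc.1)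
  rw [← Finset.sum_subset (Finset.subset_univ _) hzero,
    Finset.sum_image (fun a _ b _ h => hinj h)]
  push_cast
  refine Finset.sum_congr rfl fun j _ => Finset.prod_congr rfl fun m _ => ?_
  simp [vv, hemb]

lemma eval_neck' (F : Type) [Field F] {N : ℕ} (h3 : 3 ≤ N) (n : ℕ) (hn : 0 < n + 1)
    (μ : ℕ → Fin 2) :
    MvPolynomial.eval (vv F N) (neck F N (n+1) hn μ) =
      ((Matrix.trace (List.ofFn fun m : Fin (n+1) => mval (μ m.val)).prod : ℤ) : F) := by
  rw [eval_neck F h3 (n+1) hn μ]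
  exact congrArg Int.cast (cyclic_sum n (fun i => mval (μ i)))

lemma eval_neck_eq (F : Type) [Field F] {N : ℕ} (h3 : 3 ≤ N) (n : ℕ) (hn : 0 < n + 1)
    (μ : ℕ → Fin 2) (z : ℤ)
    (h : Matrix.trace (List.ofFn fun m : Fin (n+1) => mval (μ m.val)).prod = z) :
    MvPolynomial.eval (vv F N) (neck F N (n+1) hn μ) = (z : F) := by
  rw [eval_neck' F h3 n hn μ, h]

/-- For all sufficiently large `N`, the element
`N·(x_{1121222} − x_{1122212}) + 3·x₂·(x_{112212} − x_{112122})` of `S(gl_N)^{⊗2}`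
is nonzero. -/
theorem psi_heptapus_nonzero (F : Type) [Field F] [CharZero F] :
    ∃ N₀ : ℕ, ∀ N : ℕ, N₀ ≤ N →
      (N : MvPolynomial (Fin 2 × Fin N × Fin N) F) *
          (neck F N 7 (by omega) (fun m => ![0,0,1,0,1,1,1] ⟨m % 7, Nat.mod_lt _ (by omega)⟩) -
           neck F N 7 (by omega) (fun m => ![0,0,1,1,1,0,1] ⟨m % 7, Nat.mod_lt _ (by omega)⟩)) +
        3 * neck F N 1 (by omega) (fun _ => 1) *
          (neck F N 6 (by omega) (fun m => ![0,0,1,1,0,1] ⟨m % 6, Nat.mod_lt _ (by omega)⟩) -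
           neck F N 6 (by omega) (fun m => ![0,0,1,0,1,1] ⟨m % 6, Nat.mod_lt _ (by omega)⟩)) ≠ 0 := by
  refine ⟨4, fun N hN h0 => ?_⟩
  have h3 : (3 : ℕ) ≤ N := by omega
  have hev := congrArg (MvPolynomial.eval (vv F N)) h0
  simp only [map_add, map_mul, map_sub, map_natCast, map_ofNat, map_zero] at hev
  rw [eval_neck_eq F h3 6 (by omega) (fun m => ![0,0,1,0,1,1,1] ⟨m % 7, Nat.mod_lt _ (Nat.succ_pos _)⟩) 1 (by decide),
    eval_neck_eq F h3 6 (by omega) (fun m => ![0,0,1,1,1,0,1] ⟨m % 7, Nat.mod_lt _ (Nat.succ_pos _)⟩) 0 (by decide),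
    eval_neck_eq F h3 0 (by omega) (fun _ => 1) 1 (by decide),
    eval_neck_eq F h3 5 (by omega) (fun m => ![0,0,1,1,0,1] ⟨m % 6, Nat.mod_lt _ (Nat.succ_pos _)⟩) 0 (by decide),
    eval_neck_eq F h3 5 (by omega) (fun m => ![0,0,1,0,1,1] ⟨m % 6, Nat.mod_lt _ (Nat.succ_pos _)⟩) 1 (by decide)] at hev
  norm_num at hev
  have : (N : F) = 3 := by linear_combination hev
  have : N = 3 := by exact_mod_cast this
  omega
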